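/- Let W be the complete wheel graph on n ≥ 8 vertices. A set L ⊆ C is an AP 2-landmark set of W if and only if it satisfies: for every i, if c_i ∉ L and c_{i+1} ∉ L, then c_{i−3}, c_{i−2}, c_{i−1}, c_{i+2}, c_{i+3}, c_{i+4} ∈ L (indices modulo n−1). Moreover md_2^AP(W) = ⌊n/2⌋. -/

import Mathlib

/-- `L` is an AP `k`-landmark set of `G`: every pair of distinct vertices of `V` is
separated (i.e. has different distances) by at least `k` vertices of `L`. -/
def isAPLandmark {V : Type*} (G : SimpleGraph V) (k : ℕ) (L : Finset V) : Prop :=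
  ∀ u v : V, u ≠ v → k ≤ (L.filter fun τ => G.dist u τ ≠ G.dist v τ).card

/-- The complete wheel graph with cycle `c_1, …, c_m` (encoded as `some i` for
`i : ZMod m`) and central vertex `h` (encoded as `none`); a wheel on `n` vertices has
`m = n - 1`. -/
def wheelGraph (m : ℕ) : SimpleGraph (Option (ZMod m)) :=
  SimpleGraph.fromRel fun u v => u = none ∨ ∃ i : ZMod m, u = some i ∧ v = some (i + 1)

/-- The AP `k = 2` condition on a set of vertices of the wheel: whenever two consecutive
cycle vertices `c_i, c_{i+1}` are not in `L`, the three cycle vertices preceding them and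
the three cycle vertices following them are in `L`. -/
def apCond2 (m : ℕ) (L : Finset (Option (ZMod m))) : Prop :=
  ∀ i : ZMod m, some i ∉ L → some (i + 1) ∉ L →
    some (i - 3) ∈ L ∧ some (i - 2) ∈ L ∧ some (i - 1) ∈ L ∧
    some (i + 2) ∈ L ∧ some (i + 3) ∈ L ∧ some (i + 4) ∈ L

namespace WP

variable {m : ℕ}

lemma natCast_inj_zmod (ha : (0:ℕ) < m) {a b : ℕ} (h1 : a < m) (h2 : b < m)
    (h : (a : ZMod m) = b) : a = b := by
  haveI : NeZero m := ⟨by omega⟩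
  have := congrArg ZMod.val h
  rwa [ZMod.val_cast_of_lt h1, ZMod.val_cast_of_lt h2] at this

lemma zmod_ne (hm : 7 ≤ m) {x y : ZMod m} (k : ℕ) (h1 : k ≠ 0) (h2 : k < m)
    (hxy : x = y + (k : ℕ)) : x ≠ y := by
  subst hxy
  intro h
  have h0 : (k : ZMod m) = ((0:ℕ) : ZMod m) := by
    have := (add_eq_left).mp h
    simpa using this
  exact h1 (natCast_inj_zmod (by omega) h2 (by omega) h0)

lemma adj_none_some (i : ZMod m) : (wheelGraph m).Adj none (some i) := by
  rw [wheelGraph, SimpleGraph.fromRel_adj]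
  exact ⟨by simp, Or.inl (Or.inl rfl)⟩

lemma adj_some_none (i : ZMod m) : (wheelGraph m).Adj (some i) none :=
  (adj_none_some i).symm

lemma adj_some_some (hm : 7 ≤ m) {i t : ZMod m} (h : t = i + 1 ∨ i = t + 1) :
    (wheelGraph m).Adj (some i) (some t) := by
  rw [wheelGraph, SimpleGraph.fromRel_adj]
  refine ⟨?_, ?_⟩
  · rcases h with h | h
    · subst h; simp only [ne_eq, Option.some.injEq]
      exact (zmod_ne hm 1 (by omega) (by omega) (by push_cast; ring)).symm
    · subst h; simp only [ne_eq, Option.some.injEq]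
      exact zmod_ne hm 1 (by omega) (by omega) (by push_cast; ring)
  · rcases h with h | h
    · exact Or.inl (Or.inr ⟨i, rfl, by rw [h]⟩)
    · exact Or.inr (Or.inr ⟨t, rfl, by rw [h]⟩)

lemma not_adj_some_some (hm : 7 ≤ m) {i t : ZMod m} (h2 : t ≠ i + 1) (h3 : i ≠ t + 1) :
    ¬ (wheelGraph m).Adj (some i) (some t) := by
  rw [wheelGraph, SimpleGraph.fromRel_adj]
  rintro ⟨-, (h | h) | (h | h)⟩
  · exact nomatch h
  · obtain ⟨k, hk1, hk2⟩ := h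
    obtain rfl := Option.some.injEq .. ▸ hk1
    exact h2 (by injection hk2)
  · exact nomatch h
  · obtain ⟨k, hk1, hk2⟩ := h
    obtain rfl := Option.some.injEq .. ▸ hk1
    exact h3 (by injection hk2)

lemma dist_none_some (i : ZMod m) : (wheelGraph m).dist none (some i) = 1 :=
  SimpleGraph.dist_eq_one_iff_adj.mpr (adj_none_some i)

lemma dist_some_none (i : ZMod m) : (wheelGraph m).dist (some i) none = 1 :=
  SimpleGraph.dist_eq_one_iff_adj.mpr (adj_some_none i)

lemma dist1 (hm : 7 ≤ m) {i t : ZMod m} (h : t = i + 1 ∨ i = t + 1) :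
    (wheelGraph m).dist (some i) (some t) = 1 :=
  SimpleGraph.dist_eq_one_iff_adj.mpr (adj_some_some hm h)

lemma dist2 (hm : 7 ≤ m) {i t : ZMod m} (h1 : t ≠ i) (h2 : t ≠ i + 1) (h3 : i ≠ t + 1) :
    (wheelGraph m).dist (some i) (some t) = 2 := by
  have hw := SimpleGraph.dist_le (SimpleGraph.Walk.cons (adj_some_none i)
      (SimpleGraph.Walk.cons (adj_none_some t) SimpleGraph.Walk.nil))
  simp only [SimpleGraph.Walk.length_cons, SimpleGraph.Walk.length_nil] at hw
  have h0 : (wheelGraph m).dist (some i) (some t) ≠ 0 := by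
    intro h
    have hr : (wheelGraph m).Reachable (some i) (some t) :=
      ⟨SimpleGraph.Walk.cons (adj_some_none i) (adj_none_some t).toWalk⟩
    have := (SimpleGraph.Reachable.dist_eq_zero_iff hr).mp h
    exact h1 (by injection this.symm)
  have hne1 : (wheelGraph m).dist (some i) (some t) ≠ 1 := by
    intro h
    exact not_adj_some_some hm h2 h3 (SimpleGraph.dist_eq_one_iff_adj.mp h)
  omega

end WP

namespace WP
lemma NZ {m : ℕ} (hm : 7 ≤ m) (k : ℕ) (h1 : k ≠ 0) (h2 : k ≤ 6) : ((k : ℕ) : ZMod m) ≠ 0 := by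
  intro h
  exact h1 (natCast_inj_zmod (by omega) (by omega) (by omega)
    (show ((k:ℕ):ZMod m) = ((0:ℕ):ZMod m) by simpa using h))

lemma ne_of_sub {m : ℕ} (hm : 7 ≤ m) (k : ℕ) (h1 : k ≠ 0) (h2 : k ≤ 6) {x y : ZMod m}
    (hxy : x - y = (k : ℕ)) : x ≠ y := fun h => NZ hm k h1 h2 (by rw [← hxy, h, sub_self])

lemma sne {m : ℕ} (hm : 7 ≤ m) (k : ℕ) (h1 : k ≠ 0) (h2 : k ≤ 6) {x y : ZMod m}
    (hxy : x - y = (k : ℕ)) : (some x : Option (ZMod m)) ≠ some y :=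
  fun h => ne_of_sub hm k h1 h2 hxy (Option.some.inj h)
end WP

namespace WP2
open WP

variable {m : ℕ}

lemma sep_mem (hm : 7 ≤ m) {i j t : ZMod m}
    (h : (wheelGraph m).dist (some i) (some t) ≠ (wheelGraph m).dist (some j) (some t)) :
    t = i ∨ t = i + 1 ∨ i = t + 1 ∨ t = j ∨ t = j + 1 ∨ j = t + 1 := by
  by_contra hc
  push_neg at hc
  obtain ⟨h1, h2, h3, h4, h5, h6⟩ := hc
  rw [dist2 hm h1 h2 h3, dist2 hm h4 h5 h6] at h
  exact h rfl

lemma pair_contra (L : Finset (Option (ZMod m))) (hL : isAPLandmark (wheelGraph m) 2 L)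
    {a b : ZMod m} (hab : a ≠ b) (x : ZMod m)
    (hsub : ∀ t : ZMod m, some t ∈ L →
      (wheelGraph m).dist (some a) (some t) ≠ (wheelGraph m).dist (some b) (some t) → t = x) :
    False := by
  have h2 := hL (some a) (some b) (by simpa using hab)
  have hle : (L.filter fun τ =>
      (wheelGraph m).dist (some a) τ ≠ (wheelGraph m).dist (some b) τ).card ≤ 1 := by
    apply Finset.card_le_one.mpr
    intro u hu v hv
    rw [Finset.mem_filter] at hu hv
    match u, hu with
    | none, hu => simp [dist_some_none] at hu
    | some t, hu =>
      match v, hv with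
      | none, hv => simp [dist_some_none] at hv
      | some s, hv =>
        rw [hsub t hu.1 hu.2, hsub s hv.1 hv.2]
  omega

lemma fwd (hm : 7 ≤ m) (L : Finset (Option (ZMod m)))
    (hL : isAPLandmark (wheelGraph m) 2 L) : apCond2 m L := by
  have NE : ∀ (x y : ZMod m) (k : ℕ), k ≠ 0 → k ≤ 6 → x = y + (k:ℕ) → x ≠ y :=
    fun x y k h1 h2 h3 => zmod_ne hm k h1 (by omega) h3
  intro i hi hi1
  have c2 : some (i - 2) ∈ L := by
    by_contra h
    refine pair_contra L hL (a := i - 1) (b := i)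
      ((NE i (i-1) 1 (by norm_num) (by norm_num) (by push_cast; ring)).symm) (i - 1) ?_
    intro t ht hsep
    rcases sep_mem hm hsep with h' | h' | h' | h' | h' | h'
    · exact h'
    · exact absurd ht (by rw [show t = i from by rw [h']; ring]; exact hi)
    · exact absurd ht (by rw [show t = i - 2 from by linear_combination -h']; exact h)
    · exact absurd ht (by rw [h']; exact hi)
    · exact absurd ht (by rw [h']; exact hi1)
    · exact (show t = i - 1 from by linear_combination -h')
  have c3 : some (i - 1) ∈ L := by
    by_contra h
    refine pair_contra L hL (a := i) (b := i + 1)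
      (NE (i+1) i 1 (by norm_num) (by norm_num) (by push_cast; ring)).symm (i + 2) ?_
    intro t ht hsep
    rcases sep_mem hm hsep with h' | h' | h' | h' | h' | h'
    · exact absurd ht (by rw [h']; exact hi)
    · exact absurd ht (by rw [h']; exact hi1)
    · exact absurd ht (by rw [show t = i - 1 from by linear_combination -h']; exact h)
    · exact absurd ht (by rw [h']; exact hi1)
    · exact h'.trans (by ring)
    · exact absurd ht (by rw [show t = i from by linear_combination -h']; exact hi)
  have c4 : some (i + 2) ∈ L := by
    by_contra h
    refine pair_contra L hL (a := i) (b := i + 1)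
      (NE (i+1) i 1 (by norm_num) (by norm_num) (by push_cast; ring)).symm (i - 1) ?_
    intro t ht hsep
    rcases sep_mem hm hsep with h' | h' | h' | h' | h' | h'
    · exact absurd ht (by rw [h']; exact hi)
    · exact absurd ht (by rw [h']; exact hi1)
    · exact (show t = i - 1 from by linear_combination -h')
    · exact absurd ht (by rw [h']; exact hi1)
    · exact absurd ht (by rw [show t = i + 2 from h'.trans (by ring)]; exact h)
    · exact absurd ht (by rw [show t = i from by linear_combination -h']; exact hi)
  have c1 : some (i - 3) ∈ L := by
    by_contra h
    refine pair_contra L hL (a := i - 2) (b := i)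
      ((NE i (i-2) 2 (by norm_num) (by norm_num) (by push_cast; ring)).symm) (i - 2) ?_
    intro t ht hsep
    rcases sep_mem hm hsep with h' | h' | h' | h' | h' | h'
    · exact h'
    · -- t = (i-2)+1 = i-1 : midpoint, not a separator
      exfalso
      rw [dist1 hm (Or.inl h'), dist1 hm (Or.inr (by rw [h']; ring))] at hsep
      exact hsep rfl
    · exact absurd ht (by rw [show t = i - 3 from by linear_combination -h']; exact h)
    · exact absurd ht (by rw [h']; exact hi)
    · exact absurd ht (by rw [h']; exact hi1)
    · -- i = t + 1, t = i - 1 midpoint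
      exfalso
      have ht' : t = i - 1 := by linear_combination -h'
      rw [dist1 hm (Or.inl (by rw [ht']; ring)), dist1 hm (Or.inr h')] at hsep
      exact hsep rfl
  have c5 : some (i + 3) ∈ L := by
    by_contra h
    refine pair_contra L hL (a := i + 1) (b := i + 2)
      ((NE (i+2) (i+1) 1 (by norm_num) (by norm_num) (by push_cast; ring)).symm) (i + 2) ?_
    intro t ht hsep
    rcases sep_mem hm hsep with h' | h' | h' | h' | h' | h'
    · exact absurd ht (by rw [h']; exact hi1)
    · exact h'.trans (by ring)
    · exact absurd ht (by rw [show t = i from by linear_combination -h']; exact hi)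
    · exact h'
    · exact absurd ht (by rw [show t = i + 3 from h'.trans (by ring)]; exact h)
    · exact absurd ht (by rw [show t = i + 1 from by linear_combination -h']; exact hi1)
  have c6 : some (i + 4) ∈ L := by
    by_contra h
    refine pair_contra L hL (a := i + 1) (b := i + 3)
      ((NE (i+3) (i+1) 2 (by norm_num) (by norm_num) (by push_cast; ring)).symm) (i + 3) ?_
    intro t ht hsep
    rcases sep_mem hm hsep with h' | h' | h' | h' | h' | h'
    · exact absurd ht (by rw [h']; exact hi1)
    · -- t = i + 2, midpoint
      exfalso
      have ht' : t = i + 2 := h'.trans (by ring)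
      rw [dist1 hm (Or.inl (by rw [ht']; ring)),
        dist1 hm (Or.inr (by rw [ht']; ring))] at hsep
      exact hsep rfl
    · exact absurd ht (by rw [show t = i from by linear_combination -h']; exact hi)
    · exact h'
    · exact absurd ht (by rw [show t = i + 4 from h'.trans (by ring)]; exact h)
    · -- i + 3 = t + 1, t = i + 2 midpoint
      exfalso
      have ht' : t = i + 2 := by linear_combination -h'
      rw [dist1 hm (Or.inl (by rw [ht']; ring)),
        dist1 hm (Or.inr (by rw [ht']; ring))] at hsep
      exact hsep rfl
  exact ⟨c1, c2, c3, c4, c5, c6⟩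

end WP2

namespace WP3
open WP WP2

variable {m : ℕ} [NeZero m]

/-- The cycle part of `L` as a subset of `ZMod m`. -/
def S (L : Finset (Option (ZMod m))) : Finset (ZMod m) :=
  Finset.univ.filter fun i => some i ∈ L

lemma mem_S {L : Finset (Option (ZMod m))} {i : ZMod m} : i ∈ S L ↔ some i ∈ L := by
  simp [S]

lemma card_S_le (L : Finset (Option (ZMod m))) : (S L).card ≤ L.card :=
  Finset.card_le_card_of_injOn some (fun i hi => mem_S.mp hi)
    (fun a _ b _ h => by injection h)

lemma card_S (hm : 7 ≤ m) (L : Finset (Option (ZMod m))) (hC : apCond2 m L) :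
    (m + 1) / 2 ≤ (S L).card := by
  classical
  have hmap : ∀ j ∈ Finset.univ \ S L,
      (if j + 1 ∈ S L then j + 1 else j - 1) ∈ S L := by
    intro j hj
    rw [Finset.mem_sdiff] at hj
    split_ifs with h1
    · exact h1
    · exact mem_S.mpr (hC j (fun hh => hj.2 (mem_S.mpr hh)) (fun hh => h1 (mem_S.mpr hh))).2.2.1
  have hinj : Set.InjOn (fun j => if j + 1 ∈ S L then j + 1 else j - 1)
      ↑(Finset.univ \ S L) := by
    intro j hj j' hj' h
    simp only [Finset.coe_sdiff, Finset.coe_univ, Set.mem_diff, Finset.mem_coe] at hj hj'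
    simp only at h
    split_ifs at h with h1 h2 h2
    · exact add_right_cancel h
    · -- j + 1 = j' - 1, so j = j' - 2 ; but j', j'+1 ∉ S forces j' - 2 ∈ S
      exfalso
      have hj'2 := (hC j' (fun hh => hj'.2 (mem_S.mpr hh)) (fun hh => h2 (mem_S.mpr hh))).2.1
      have : j = j' - 2 := by linear_combination h
      exact hj.2 (this ▸ mem_S.mpr hj'2)
    · exfalso
      have hj2 := (hC j (fun hh => hj.2 (mem_S.mpr hh)) (fun hh => h1 (mem_S.mpr hh))).2.1
      have : j' = j - 2 := by linear_combination -h
      exact hj'.2 (this ▸ mem_S.mpr hj2)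
    · linear_combination h
  have hcard := Finset.card_le_card_of_injOn _ hmap hinj
  have h1 : (Finset.univ \ S L).card = m - (S L).card := by
    rw [Finset.card_sdiff_of_subset (Finset.subset_univ _), Finset.card_univ, ZMod.card]
  have h2 : (S L).card ≤ m := by
    have := Finset.card_le_univ (S L)
    rwa [ZMod.card] at this
  omega

omit [NeZero m] in
lemma exists_tri (L : Finset (Option (ZMod m))) (hC : apCond2 m L) (i : ZMod m) :
    ∃ t : ZMod m, some t ∈ L ∧ (t = i - 1 ∨ t = i ∨ t = i + 1) := by
  by_cases h0 : some i ∈ L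
  · exact ⟨i, h0, Or.inr (Or.inl rfl)⟩
  by_cases h1 : some (i + 1) ∈ L
  · exact ⟨i + 1, h1, Or.inr (Or.inr rfl)⟩
  · exact ⟨i - 1, (hC i h0 h1).2.2.1, Or.inl rfl⟩

omit [NeZero m] in
lemma two_le (L : Finset (Option (ZMod m))) (u v : Option (ZMod m)) {x y : Option (ZMod m)}
    (hx : x ∈ L) (hy : y ∈ L) (hxy : x ≠ y)
    (hsx : (wheelGraph m).dist u x ≠ (wheelGraph m).dist v x)
    (hsy : (wheelGraph m).dist u y ≠ (wheelGraph m).dist v y) :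
    2 ≤ (L.filter fun τ => (wheelGraph m).dist u τ ≠ (wheelGraph m).dist v τ).card :=
  Finset.one_lt_card.mpr
    ⟨x, Finset.mem_filter.mpr ⟨hx, hsx⟩, y, Finset.mem_filter.mpr ⟨hy, hsy⟩, hxy⟩

lemma hub_pair (hm : 7 ≤ m) (L : Finset (Option (ZMod m))) (hC : apCond2 m L) (i : ZMod m) :
    2 ≤ (L.filter fun τ =>
      (wheelGraph m).dist none τ ≠ (wheelGraph m).dist (some i) τ).card := by
  classical
  have hS := card_S hm L hC
  have hT : 2 ≤ (S L \ {i - 1, i + 1}).card := by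
    have h1 := Finset.card_le_card_sdiff_add_card (s := S L) (t := ({i - 1, i + 1} : Finset (ZMod m)))
    have h2 : ({i - 1, i + 1} : Finset (ZMod m)).card ≤ 2 := by
      apply le_trans (Finset.card_insert_le _ _); simp
    omega
  obtain ⟨a, ha, b, hb, hab⟩ := Finset.one_lt_card.mp hT
  rw [Finset.mem_sdiff, Finset.mem_insert, Finset.mem_singleton] at ha hb
  push_neg at ha hb
  have key : ∀ c : ZMod m, c ≠ i - 1 → c ≠ i + 1 →
      (wheelGraph m).dist none (some c) ≠ (wheelGraph m).dist (some i) (some c) := by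
    intro c h1 h2
    rw [dist_none_some]
    by_cases hc : c = i
    · subst hc; rw [SimpleGraph.dist_self]; omega
    · rw [dist2 hm hc h2 (fun hh => h1 (by linear_combination -hh))]; omega
  exact two_le L _ _ (mem_S.mp ha.1) (mem_S.mp hb.1) (by simpa using hab)
    (key a ha.2.1 ha.2.2) (key b hb.2.1 hb.2.2)

end WP3

namespace WP4
open WP WP2 WP3

variable {m : ℕ}

lemma P1 (hm : 7 ≤ m) (L : Finset (Option (ZMod m))) (hC : apCond2 m L) (i : ZMod m) :
    2 ≤ (L.filter fun τ =>
      (wheelGraph m).dist (some i) τ ≠ (wheelGraph m).dist (some (i + 1)) τ).card := by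
  have d00 : (wheelGraph m).dist (some i) (some i) = 0 := SimpleGraph.dist_self
  have dA : (wheelGraph m).dist (some (i+1)) (some i) = 1 := dist1 hm (Or.inr rfl)
  have dB : (wheelGraph m).dist (some i) (some (i+1)) = 1 := dist1 hm (Or.inl rfl)
  have dC : (wheelGraph m).dist (some (i+1)) (some (i+1)) = 0 := SimpleGraph.dist_self
  have dD : (wheelGraph m).dist (some i) (some (i-1)) = 1 := dist1 hm (Or.inr (by ring))
  have dE : (wheelGraph m).dist (some (i+1)) (some (i-1)) = 2 :=
    dist2 hm ((ne_of_sub hm 2 (by norm_num) (by norm_num) (by push_cast; ring)).symm)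
      ((ne_of_sub hm 3 (by norm_num) (by norm_num) (by push_cast; ring)).symm)
      (ne_of_sub hm 1 (by norm_num) (by norm_num) (by push_cast; ring))
  have dF : (wheelGraph m).dist (some i) (some (i+2)) = 2 :=
    dist2 hm (ne_of_sub hm 2 (by norm_num) (by norm_num) (by push_cast; ring))
      (ne_of_sub hm 1 (by norm_num) (by norm_num) (by push_cast; ring))
      ((ne_of_sub hm 3 (by norm_num) (by norm_num) (by push_cast; ring)).symm)
  have dG : (wheelGraph m).dist (some (i+1)) (some (i+2)) = 1 := dist1 hm (Or.inl (by ring))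
  by_cases h0 : some i ∈ L <;> by_cases h1 : some (i+1) ∈ L
  · exact two_le L _ _ h0 h1
      ((sne hm 1 (by norm_num) (by norm_num) (by push_cast; ring)).symm)
      (by rw [d00, dA]; omega) (by rw [dB, dC]; omega)
  · by_cases h2 : some (i+2) ∈ L
    · exact two_le L _ _ h0 h2
        ((sne hm 2 (by norm_num) (by norm_num) (by push_cast; ring)).symm)
        (by rw [d00, dA]; omega) (by rw [dF, dG]; omega)
    · have hm1 : some (i-1) ∈ L := by
        have h' := (hC (i+1) h1 (by rwa [show i+1+1 = i+2 from by ring])).2.1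
        rwa [show i+1-2 = i-1 from by ring] at h'
      exact two_le L _ _ h0 hm1
        (sne hm 1 (by norm_num) (by norm_num) (by push_cast; ring))
        (by rw [d00, dA]; omega) (by rw [dD, dE]; omega)
  · by_cases h2 : some (i-1) ∈ L
    · exact two_le L _ _ h2 h1
        ((sne hm 2 (by norm_num) (by norm_num) (by push_cast; ring)).symm)
        (by rw [dD, dE]; omega) (by rw [dB, dC]; omega)
    · have hp2 : some (i+2) ∈ L := by
        have h' := (hC (i-1) h2 (by rwa [show i-1+1 = i from by ring])).2.2.2.2.1
        rwa [show i-1+3 = i+2 from by ring] at h'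
      exact two_le L _ _ h1 hp2
        ((sne hm 1 (by norm_num) (by norm_num) (by push_cast; ring)).symm)
        (by rw [dB, dC]; omega) (by rw [dF, dG]; omega)
  · obtain ⟨-, -, hm1, hp2, -, -⟩ := hC i h0 h1
    exact two_le L _ _ hm1 hp2
      ((sne hm 3 (by norm_num) (by norm_num) (by push_cast; ring)).symm)
      (by rw [dD, dE]; omega) (by rw [dF, dG]; omega)

lemma P2 (hm : 7 ≤ m) (L : Finset (Option (ZMod m))) (hC : apCond2 m L) (i : ZMod m) :
    2 ≤ (L.filter fun τ =>
      (wheelGraph m).dist (some i) τ ≠ (wheelGraph m).dist (some (i + 2)) τ).card := by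
  have d00 : (wheelGraph m).dist (some i) (some i) = 0 := SimpleGraph.dist_self
  have dA : (wheelGraph m).dist (some (i+2)) (some i) = 2 :=
    dist2 hm ((ne_of_sub hm 2 (by norm_num) (by norm_num) (by push_cast; ring)).symm)
      ((ne_of_sub hm 3 (by norm_num) (by norm_num) (by push_cast; ring)).symm)
      (ne_of_sub hm 1 (by norm_num) (by norm_num) (by push_cast; ring))
  have dB : (wheelGraph m).dist (some i) (some (i+2)) = 2 :=
    dist2 hm (ne_of_sub hm 2 (by norm_num) (by norm_num) (by push_cast; ring))
      (ne_of_sub hm 1 (by norm_num) (by norm_num) (by push_cast; ring))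
      ((ne_of_sub hm 3 (by norm_num) (by norm_num) (by push_cast; ring)).symm)
  have dC : (wheelGraph m).dist (some (i+2)) (some (i+2)) = 0 := SimpleGraph.dist_self
  have dD : (wheelGraph m).dist (some i) (some (i+3)) = 2 :=
    dist2 hm (ne_of_sub hm 3 (by norm_num) (by norm_num) (by push_cast; ring))
      (ne_of_sub hm 2 (by norm_num) (by norm_num) (by push_cast; ring))
      ((ne_of_sub hm 4 (by norm_num) (by norm_num) (by push_cast; ring)).symm)
  have dE : (wheelGraph m).dist (some (i+2)) (some (i+3)) = 1 := dist1 hm (Or.inl (by ring))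
  have dF : (wheelGraph m).dist (some i) (some (i-1)) = 1 := dist1 hm (Or.inr (by ring))
  have dG : (wheelGraph m).dist (some (i+2)) (some (i-1)) = 2 :=
    dist2 hm ((ne_of_sub hm 3 (by norm_num) (by norm_num) (by push_cast; ring)).symm)
      ((ne_of_sub hm 4 (by norm_num) (by norm_num) (by push_cast; ring)).symm)
      (ne_of_sub hm 2 (by norm_num) (by norm_num) (by push_cast; ring))
  by_cases h0 : some i ∈ L <;> by_cases h2 : some (i+2) ∈ L
  · exact two_le L _ _ h0 h2
      ((sne hm 2 (by norm_num) (by norm_num) (by push_cast; ring)).symm)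
      (by rw [d00, dA]; omega) (by rw [dB, dC]; omega)
  · by_cases h3 : some (i+3) ∈ L
    · exact two_le L _ _ h0 h3
        ((sne hm 3 (by norm_num) (by norm_num) (by push_cast; ring)).symm)
        (by rw [d00, dA]; omega) (by rw [dD, dE]; omega)
    · by_cases h4 : some (i-1) ∈ L
      · exact two_le L _ _ h4 h0
          ((sne hm 1 (by norm_num) (by norm_num) (by push_cast; ring)).symm)
          (by rw [dF, dG]; omega) (by rw [d00, dA]; omega)
      · exfalso
        have h'' := (hC (i+2) h2 (by rwa [show i+2+1 = i+3 from by ring])).1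
        rw [show i+2-3 = i-1 from by ring] at h''
        exact h4 h''
  · by_cases h4 : some (i-1) ∈ L
    · exact two_le L _ _ h4 h2
        ((sne hm 3 (by norm_num) (by norm_num) (by push_cast; ring)).symm)
        (by rw [dF, dG]; omega) (by rw [dB, dC]; omega)
    · by_cases h3 : some (i+3) ∈ L
      · exact two_le L _ _ h2 h3
          ((sne hm 1 (by norm_num) (by norm_num) (by push_cast; ring)).symm)
          (by rw [dB, dC]; omega) (by rw [dD, dE]; omega)
      · exfalso
        have h' := (hC (i-1) h4 (by rwa [show i-1+1 = i from by ring])).2.2.2.2.2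
        rw [show i-1+4 = i+3 from by ring] at h'
        exact h3 h'
  · have h3 : some (i+3) ∈ L := by
      by_contra h3
      have h' := (hC (i+2) h2 (by rwa [show i+2+1 = i+3 from by ring])).2.1
      rw [show i+2-2 = i from by ring] at h'
      exact h0 h'
    have h4 : some (i-1) ∈ L := by
      by_contra h4
      have h'' := (hC (i-1) h4 (by rwa [show i-1+1 = i from by ring])).2.2.2.2.1
      rw [show i-1+3 = i+2 from by ring] at h''
      exact h2 h''
    exact two_le L _ _ h4 h3
      ((sne hm 4 (by norm_num) (by norm_num) (by push_cast; ring)).symm)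
      (by rw [dF, dG]; omega) (by rw [dD, dE]; omega)

lemma Pfar (hm : 7 ≤ m) (L : Finset (Option (ZMod m))) (hC : apCond2 m L) (i j : ZMod m)
    (h1 : j ≠ i) (h2 : j ≠ i + 1) (h3 : i ≠ j + 1) (h4 : j ≠ i + 2) (h5 : i ≠ j + 2) :
    2 ≤ (L.filter fun τ =>
      (wheelGraph m).dist (some i) τ ≠ (wheelGraph m).dist (some j) τ).card := by
  have dle : ∀ p c : ZMod m, (c = p - 1 ∨ c = p ∨ c = p + 1) →
      (wheelGraph m).dist (some p) (some c) ≤ 1 := by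
    rintro p c (rfl | rfl | rfl)
    · rw [dist1 hm (Or.inr (by ring))]
    · rw [SimpleGraph.dist_self]; omega
    · rw [dist1 hm (Or.inl rfl)]
  have d2 : ∀ p q c : ZMod m, q ≠ p → q ≠ p + 1 → p ≠ q + 1 → q ≠ p + 2 → p ≠ q + 2 →
      (c = p - 1 ∨ c = p ∨ c = p + 1) →
      (wheelGraph m).dist (some q) (some c) = 2 := by
    rintro p q c g1 g2 g3 g4 g5 (rfl | rfl | rfl)
    · exact dist2 hm (fun h => g3 (by linear_combination h))
        (fun h => g5 (by linear_combination h)) (fun h => g1 (by linear_combination h))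
    · exact dist2 hm (fun h => g1 h.symm) (fun h => g3 h) (fun h => g2 h)
    · exact dist2 hm (fun h => g2 h.symm) (fun h => g1 (by linear_combination -h))
        (fun h => g4 (by linear_combination h))
  obtain ⟨a, ha, hatri⟩ := exists_tri L hC i
  obtain ⟨b, hb, hbtri⟩ := exists_tri L hC j
  have h1' : i ≠ j := h1.symm
  have sepa : (wheelGraph m).dist (some i) (some a) ≠ (wheelGraph m).dist (some j) (some a) := by
    have := dle i a hatri
    have := d2 i j a h1 h2 h3 h4 h5 hatri
    omega
  have sepb : (wheelGraph m).dist (some i) (some b) ≠ (wheelGraph m).dist (some j) (some b) := by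
    have := dle j b hbtri
    have := d2 j i b h1' h3 h2 h5 h4 hbtri
    omega
  have hab : a ≠ b := by
    rintro rfl
    have := dle j a hbtri
    have := d2 i j a h1 h2 h3 h4 h5 hatri
    omega
  exact two_le L _ _ ha hb (by simpa using hab) sepa sepb

lemma bwd (hm : 7 ≤ m) (L : Finset (Option (ZMod m))) (hC : apCond2 m L) :
    isAPLandmark (wheelGraph m) 2 L := by
  haveI : NeZero m := ⟨by omega⟩
  have comm : ∀ u v : Option (ZMod m),
      (L.filter fun τ => (wheelGraph m).dist u τ ≠ (wheelGraph m).dist v τ) =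
      (L.filter fun τ => (wheelGraph m).dist v τ ≠ (wheelGraph m).dist u τ) :=
    fun u v => Finset.filter_congr (fun x _ => ne_comm)
  intro u v huv
  match u, v with
  | none, none => exact absurd rfl huv
  | none, some i => exact hub_pair hm L hC i
  | some i, none => rw [comm]; exact hub_pair hm L hC i
  | some i, some j =>
    have hij : i ≠ j := by simpa using huv
    by_cases e1 : j = i + 1
    · subst e1; exact P1 hm L hC i
    by_cases e1' : i = j + 1
    · rw [comm]; subst e1'; exact P1 hm L hC j
    by_cases e2 : j = i + 2
    · subst e2; exact P2 hm L hC i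
    by_cases e2' : i = j + 2
    · rw [comm]; subst e2'; exact P2 hm L hC j
    · exact Pfar hm L hC i j hij.symm e1 e1' e2 e2'

end WP4

namespace WP5
open WP WP2 WP3 WP4

variable {m : ℕ}

lemma evens_card (M : ℕ) : ((Finset.range M).filter fun x => x % 2 = 0).card = (M + 1) / 2 := by
  induction M with
  | zero => simp
  | succ k ih =>
    rw [Finset.range_add_one, Finset.filter_insert]
    by_cases h : k % 2 = 0
    · rw [if_pos h, Finset.card_insert_of_notMem (by simp), ih]; omega
    · rw [if_neg h, ih]; omega

def L0 (m : ℕ) [NeZero m] : Finset (Option (ZMod m)) :=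
  (Finset.univ.filter fun i : ZMod m => i.val % 2 = 0).image some

lemma mem_L0 [NeZero m] {i : ZMod m} : some i ∈ L0 m ↔ i.val % 2 = 0 := by
  simp [L0]

lemma card_L0 [NeZero m] : (L0 m).card = (m + 1) / 2 := by
  rw [L0, Finset.card_image_of_injective _ (Option.some_injective _), ← evens_card m]
  apply Finset.card_bij (fun i _ => i.val)
  · intro a ha
    simp only [Finset.mem_filter, Finset.mem_range, Finset.mem_univ, true_and] at *
    exact ⟨ZMod.val_lt a, ha⟩
  · intro a _ b _ h
    exact ZMod.val_injective m h
  · intro b hb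
    simp only [Finset.mem_filter, Finset.mem_range] at hb
    refine ⟨(b : ZMod m), ?_, ZMod.val_cast_of_lt hb.1⟩
    simp only [Finset.mem_filter, Finset.mem_univ, true_and]
    rw [ZMod.val_cast_of_lt hb.1]
    exact hb.2

lemma apCond2_L0 (hm : 7 ≤ m) [NeZero m] : apCond2 m (L0 m) := by
  haveI : Fact (1 < m) := ⟨by omega⟩
  intro i hi hi1
  exfalso
  rw [mem_L0] at hi hi1
  have hv := ZMod.val_lt i
  have hadd : (i + 1).val = (i.val + (1 : ZMod m).val) % m := ZMod.val_add i 1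
  rw [ZMod.val_one m] at hadd
  by_cases hcase : i.val + 1 = m
  · rw [hcase, Nat.mod_self] at hadd
    exact hi1 (by rw [hadd])
  · rw [Nat.mod_eq_of_lt (by omega)] at hadd
    omega

end WP5


/-- For the complete wheel graph on `n ≥ 8` vertices: a set `L ⊆ C` of cycle vertices is
an AP `2`-landmark set if and only if it satisfies the AP `k = 2` condition; moreover the
minimum cardinality of an AP `2`-landmark set is `⌊n/2⌋`. -/
theorem stmt_15 (n : ℕ) (hn : 8 ≤ n) :
    (∀ L : Finset (Option (ZMod (n - 1))), none ∉ L →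
      (isAPLandmark (wheelGraph (n - 1)) 2 L ↔ apCond2 (n - 1) L)) ∧
    IsLeast {m | ∃ L : Finset (Option (ZMod (n - 1))),
      isAPLandmark (wheelGraph (n - 1)) 2 L ∧ L.card = m} (n / 2) := by
  obtain ⟨m, rfl⟩ : ∃ m, n = m + 1 := ⟨n - 1, by omega⟩
  have hm : 7 ≤ m := by omega
  haveI : NeZero m := ⟨by omega⟩
  haveI : NeZero (m + 1 - 1) := ⟨by omega⟩
  constructor
  · intro L _
    exact ⟨WP2.fwd hm L, WP4.bwd hm L⟩
  · constructor
    · exact ⟨WP5.L0 m, WP4.bwd hm _ (WP5.apCond2_L0 hm), WP5.card_L0⟩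
    · rintro k ⟨L, hL, rfl⟩
      have h1 := WP3.card_S hm L (WP2.fwd hm L hL)
      have h2 := WP3.card_S_le L
      omega
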